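/- Let (X,d,μ) be a metric measure space, and for x ∈ X, r ≥ 0, define φ_x(r) := sup{s ∈ [0,r] : μ(B(x,s)) ≤ μ(B(x,r))/2}. If μ({x}) = 0 and r > 0, then the iterates φ_x^j(r) (with φ_x^0(r) = r and φ_x^j(r) = φ_x(φ_x^{j-1}(r))) satisfy: φ_x^j(r) > 0 for all j, the sequence {φ_x^j(r)} is strictly decreasing, μ(B(x, φ_x^j(r))) ≤ 2^{-j} μ(B(x,r)), and consequently μ(B(x, φ_x^j(r))) → 0 as j → ∞. -/

import Mathlib

open MeasureTheory Metric ENNReal Filter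

private lemma halving_key {X : Type*} [MetricSpace X] [MeasurableSpace X] [BorelSpace X]
    (μ : Measure X)
    (hμ : ∀ (x : X) (r : ℝ), 0 < r → 0 < μ (ball x r) ∧ μ (ball x r) < ⊤)
    (x : X) (hx : μ {x} = 0) (t : ℝ) (ht : 0 < t) :
    0 < sSup {s : ℝ | s ∈ Set.Icc 0 t ∧ μ (ball x s) ≤ μ (ball x t) / 2} ∧
    sSup {s : ℝ | s ∈ Set.Icc 0 t ∧ μ (ball x s) ≤ μ (ball x t) / 2} < t ∧
    μ (ball x (sSup {s : ℝ | s ∈ Set.Icc 0 t ∧ μ (ball x s) ≤ μ (ball x t) / 2}))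
      ≤ μ (ball x t) / 2 := by
  obtain ⟨hM0, hMtop⟩ := hμ x t ht
  set M := μ (ball x t) with hM
  set S : Set ℝ := {s : ℝ | s ∈ Set.Icc 0 t ∧ μ (ball x s) ≤ M / 2} with hS
  have h0S : (0:ℝ) ∈ S := ⟨⟨le_refl 0, ht.le⟩, by simp⟩
  have hne : S.Nonempty := ⟨0, h0S⟩
  have hbdd : BddAbove S := ⟨t, fun s hs => hs.1.2⟩
  set a := sSup S with ha
  have hat : a ≤ t := csSup_le hne fun s hs => hs.1.2
  -- half positive
  have hhalf : 0 < M / 2 := ENNReal.half_pos hM0.ne'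
  -- positivity of a
  have hradtend : Tendsto (fun n : ℕ => t / (n + 1)) atTop (nhds 0) := by
    have : Tendsto (fun n : ℕ => 1 / ((n : ℝ) + 1)) atTop (nhds 0) :=
      tendsto_one_div_add_atTop_nhds_zero_nat
    have h2 := this.const_mul t
    simpa [div_eq_mul_inv, mul_comm, mul_assoc] using h2
  have htend : Tendsto (fun n : ℕ => μ (ball x (t / (n + 1)))) atTop (nhds 0) := by
    have hInter : ⋂ n : ℕ, ball x (t / (n + 1)) = {x} := by
      ext y
      simp only [Set.mem_iInter, mem_ball, Set.mem_singleton_iff]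
      constructor
      · intro h
        have hle : dist y x ≤ 0 := ge_of_tendsto' hradtend fun n => (h n).le
        have := dist_nonneg (x := y) (y := x)
        have : dist y x = 0 := le_antisymm hle this
        exact dist_eq_zero.mp this
      · intro h n
        subst h
        simpa [dist_self] using div_pos ht (by positivity)
    have hanti : Antitone fun n : ℕ => ball x (t / (n + 1)) := by
      intro m n hmn
      apply ball_subset_ball
      gcongr
    have := MeasureTheory.tendsto_measure_iInter_atTop
      (fun n => measurableSet_ball.nullMeasurableSet) hanti
      ⟨0, by simp only [Nat.cast_zero, zero_add, div_one]; exact (hμ x t ht).2.ne⟩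
    rw [hInter, hx] at this
    exact this
  have hev : ∀ᶠ n : ℕ in atTop, μ (ball x (t / (n + 1))) < M / 2 :=
    htend.eventually_lt_const hhalf
  obtain ⟨n, hn⟩ := hev.exists
  have hmem : t / (n + 1) ∈ S := by
    refine ⟨⟨by positivity, ?_⟩, hn.le⟩
    exact div_le_self ht.le (le_add_of_nonneg_left (Nat.cast_nonneg n))
  have hapos : 0 < a := lt_of_lt_of_le (by positivity) (le_csSup hbdd hmem)
  -- measure bound
  have hmeas : μ (ball x a) ≤ M / 2 := by
    have hcover : ball x a = ⋃ n : ℕ, ball x (a - a / (n + 2)) := by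
      ext y
      simp only [Set.mem_iUnion, mem_ball]
      constructor
      · intro h
        have hd : 0 < a - dist y x := by linarith
        obtain ⟨n, hn⟩ := exists_nat_gt (a / (a - dist y x))
        refine ⟨n, ?_⟩
        have h1 : a / (a - dist y x) < (n : ℝ) + 2 := by linarith
        have h2 : a / ((n : ℝ) + 2) < a - dist y x := by
          rw [div_lt_iff₀ (by positivity)]
          calc a = (a / (a - dist y x)) * (a - dist y x) := by field_simp
          _ < ((n : ℝ) + 2) * (a - dist y x) :=
            mul_lt_mul_of_pos_right h1 hd
          _ = (a - dist y x) * ((n : ℝ) + 2) := by ring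
        linarith
      · rintro ⟨n, hn⟩
        have : a / ((n : ℝ) + 2) > 0 := by positivity
        linarith
    have hmono : Monotone fun n : ℕ => ball x (a - a / (n + 2)) := by
      intro m n hmn
      apply ball_subset_ball
      have : a / ((n : ℝ) + 2) ≤ a / ((m : ℝ) + 2) := by
        gcongr
      linarith
    rw [hcover, hmono.directed_le.measure_iUnion]
    apply iSup_le
    intro n
    have hlt : a - a / ((n : ℝ) + 2) < a := by
      have : 0 < a / ((n : ℝ) + 2) := by positivity
      linarith
    obtain ⟨s, hsS, hs⟩ := exists_lt_of_lt_csSup hne hlt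
    exact le_trans (measure_mono (ball_subset_ball hs.le)) hsS.2
  have haneq : a ≠ t := by
    intro h
    have : μ (ball x a) < M := lt_of_le_of_lt hmeas (ENNReal.half_lt_self hM0.ne' hMtop.ne)
    rw [h] at this
    exact lt_irrefl _ this
  exact ⟨hapos, lt_of_le_of_ne hat haneq, hmeas⟩

theorem halving_radii_iterates {X : Type*} [MetricSpace X] [MeasurableSpace X] [BorelSpace X]
    (μ : Measure X)
    (hμ : ∀ (x : X) (r : ℝ), 0 < r → 0 < μ (ball x r) ∧ μ (ball x r) < ⊤)
    (x : X) (hx : μ {x} = 0) (r : ℝ) (hr : 0 < r)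
    (φ : ℝ → ℝ)
    (hφ : φ = fun t => sSup {s : ℝ | s ∈ Set.Icc 0 t ∧ μ (ball x s) ≤ μ (ball x t) / 2})
    (ψ : ℕ → ℝ) (hψ : ψ = fun j => φ^[j] r) :
    (∀ j : ℕ, 0 < ψ j) ∧ StrictAnti ψ ∧
      (∀ j : ℕ, μ (ball x (ψ j)) ≤ μ (ball x r) / 2 ^ j) ∧
      Tendsto (fun j : ℕ => μ (ball x (ψ j))) atTop (nhds 0) := by
  subst hψ
  have key : ∀ t : ℝ, 0 < t → 0 < φ t ∧ φ t < t ∧ μ (ball x (φ t)) ≤ μ (ball x t) / 2 := by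
    subst hφ
    exact fun t ht => halving_key μ hμ x hx t ht
  have hpos : ∀ j : ℕ, 0 < φ^[j] r := by
    intro j
    induction j with
    | zero => simpa using hr
    | succ n ih =>
      rw [Function.iterate_succ_apply']
      exact (key _ ih).1
  have hanti : StrictAnti fun j : ℕ => φ^[j] r := by
    apply strictAnti_nat_of_succ_lt
    intro n
    rw [Function.iterate_succ_apply']
    exact (key _ (hpos n)).2.1
  have hbound : ∀ j : ℕ, μ (ball x (φ^[j] r)) ≤ μ (ball x r) / 2 ^ j := by
    intro j
    induction j with
    | zero => simp
    | succ n ih =>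
      rw [Function.iterate_succ_apply']
      calc μ (ball x (φ (φ^[n] r))) ≤ μ (ball x (φ^[n] r)) / 2 := (key _ (hpos n)).2.2
      _ ≤ μ (ball x r) / 2 ^ n / 2 := ENNReal.div_le_div_right ih 2
      _ = μ (ball x r) / 2 ^ (n + 1) := by
        rw [div_eq_mul_inv, div_eq_mul_inv, div_eq_mul_inv, mul_assoc,
          ← ENNReal.mul_inv (by simp) (by simp), ← pow_succ]
  refine ⟨hpos, hanti, hbound, ?_⟩
  have hMtop : μ (ball x r) ≠ ⊤ := (hμ x r hr).2.ne
  have htend0 : Tendsto (fun j : ℕ => μ (ball x r) / 2 ^ j) atTop (nhds 0) := by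
    have h1 : Tendsto (fun j : ℕ => (2⁻¹ : ℝ≥0∞) ^ j) atTop (nhds 0) :=
      ENNReal.tendsto_pow_atTop_nhds_zero_of_lt_one (by norm_num)
    have h2 := ENNReal.Tendsto.const_mul h1 (Or.inr hMtop)
    rw [mul_zero] at h2
    refine h2.congr fun j => ?_
    rw [div_eq_mul_inv, ENNReal.inv_pow]
  exact tendsto_of_tendsto_of_tendsto_of_le_of_le tendsto_const_nhds htend0
    (fun j => zero_le) hbound
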